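/- Let ρ_AB be a density matrix on ℂ^{d_A} ⊗ ℂ^{d_B} with invertible reduced state ρ_B, and let {M_{a|x}}_{a,x} be a measurement assemblage on ℂ^{d_A}. If {M_{a|x}}_{a,x} is k-simulable, then the steering equivalent observables {S_{a|x}}_{a,x} are k-compatible with a k-copy joint observable of product form. Consequently, if {S_{a|x}}_{a,x} admits no k-copy joint observable of product form, then {M_{a|x}}_{a,x} is not k-simulable. -/

import Mathlib

open Matrix BigOperators
open scoped Kronecker ComplexOrder

noncomputable section

/-- A POVM: a finite family of positive semidefinite matrices summing to the identity. -/
def IsPOVM {ι n : Type*} [Fintype ι] [Fintype n] [DecidableEq n]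
    (M : ι → Matrix n n ℂ) : Prop :=
  (∀ i, (M i).PosSemidef) ∧ ∑ i, M i = 1

/-- A density matrix: positive semidefinite with trace one. -/
def IsDensity {n : Type*} [Fintype n] [DecidableEq n] (ρ : Matrix n n ℂ) : Prop :=
  ρ.PosSemidef ∧ ρ.trace = 1

/-- The `k`-fold tensor power of a `d × d` matrix, realized on the index type `Fin k → Fin d`. -/
def tpow {d : ℕ} (k : ℕ) (ρ : Matrix (Fin d) (Fin d) ℂ) :
    Matrix (Fin k → Fin d) (Fin k → Fin d) ℂ :=
  Matrix.of fun f g => ∏ y, ρ (f y) (g y)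

/-- The tensor product `A 0 ⊗ A 1 ⊗ ⋯ ⊗ A (k-1)` of a `k`-tuple of `d × d` matrices. -/
def prodOp {d k : ℕ} (A : Fin k → Matrix (Fin d) (Fin d) ℂ) :
    Matrix (Fin k → Fin d) (Fin k → Fin d) ℂ :=
  Matrix.of fun f g => ∏ y, A y (f y) (g y)

/-- Partial trace over the first tensor factor. -/
def trA {dA dB : ℕ} (M : Matrix (Fin dA × Fin dB) (Fin dA × Fin dB) ℂ) :
    Matrix (Fin dB) (Fin dB) ℂ :=
  Matrix.of fun j j' => ∑ i, M (i, j) (i, j')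

-- The inverse of the positive square root of a positive semidefinite matrix
-- (junk value if the matrix is not positive semidefinite).
open Classical in
def invSqrt {n : Type*} [Fintype n] [DecidableEq n] (A : Matrix n n ℂ) : Matrix n n ℂ :=
  (if h : A.PosSemidef then (h.1.eigenvectorUnitary : Matrix n n ℂ) *
    diagonal (fun i => ((Real.sqrt (h.1.eigenvalues i) : ℝ) : ℂ)) *
    (star h.1.eigenvectorUnitary : Matrix n n ℂ) else 0)⁻¹

/-- The steering-equivalent-observable map: `A ↦ ρ_B^{-1/2} tr_A[(A ⊗ 𝟙) ρ_AB] ρ_B^{-1/2}`. -/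
def SEO {dA dB : ℕ} (ρAB : Matrix (Fin dA × Fin dB) (Fin dA × Fin dB) ℂ)
    (A : Matrix (Fin dA) (Fin dA) ℂ) : Matrix (Fin dB) (Fin dB) ℂ :=
  invSqrt (trA ρAB) * trA ((A ⊗ₖ (1 : Matrix (Fin dB) (Fin dB) ℂ)) * ρAB) * invSqrt (trA ρAB)

/-- `k`-simulability: the assemblage arises from `k` POVMs by classical pre- and
post-processing. -/
def KSimulable {d na nx : ℕ} (k : ℕ)
    (M : Fin nx → Fin na → Matrix (Fin d) (Fin d) ℂ) : Prop :=
  ∃ (nb : ℕ) (B : Fin k → Fin nb → Matrix (Fin d) (Fin d) ℂ)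
    (p : Fin nx → Fin k → ℝ) (q : Fin nx → Fin k → Fin nb → Fin na → ℝ),
    (∀ y, IsPOVM (B y)) ∧
    (∀ x y, 0 ≤ p x y) ∧ (∀ x, ∑ y, p x y = 1) ∧
    (∀ x y b a, 0 ≤ q x y b a) ∧ (∀ x y b, ∑ a, q x y b a = 1) ∧
    ∀ x a, M x a = ∑ y, p x y • ∑ b, q x y b a • B y b

/-- `k`-compatibility with a `k`-copy joint observable of product form:
there are `k` POVMs `B y` and a post-processing `r` such that
`tr[ρ M_{a|x}] = ∑_b r(a|x,b) tr[ρ^{⊗k} (B_{b₁|1} ⊗ ⋯ ⊗ B_{b_k|k})]` for all states `ρ`. -/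
def KCompatibleProd {d na nx : ℕ} (k : ℕ)
    (M : Fin nx → Fin na → Matrix (Fin d) (Fin d) ℂ) : Prop :=
  ∃ (nb : ℕ) (B : Fin k → Fin nb → Matrix (Fin d) (Fin d) ℂ)
    (r : Fin nx → (Fin k → Fin nb) → Fin na → ℝ),
    (∀ y, IsPOVM (B y)) ∧
    (∀ x b a, 0 ≤ r x b a) ∧ (∀ x b, ∑ a, r x b a = 1) ∧
    ∀ ρ : Matrix (Fin d) (Fin d) ℂ, IsDensity ρ → ∀ x a,
      (ρ * M x a).trace =
        ∑ b : Fin k → Fin nb, r x b a • (tpow k ρ * prodOp fun y => B y (b y)).trace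
section Aux
variable {dA dB : ℕ}

private lemma sum_rot {nA nB nC : ℕ} (f : Fin nA → Fin nB → Fin nC → ℂ) :
    ∑ x1, ∑ x2, ∑ i, f x1 x2 i = ∑ i, ∑ x1, ∑ x2, f x1 x2 i :=
  calc ∑ x1, ∑ x2, ∑ i, f x1 x2 i
      = ∑ x1, ∑ i, ∑ x2, f x1 x2 i :=
        Finset.sum_congr rfl fun _ _ => Finset.sum_comm
    _ = ∑ i, ∑ x1, ∑ x2, f x1 x2 i := Finset.sum_comm

lemma trA_add (X Y : Matrix (Fin dA × Fin dB) (Fin dA × Fin dB) ℂ) :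
    trA (X + Y) = trA X + trA Y := by
  ext j j'; simp [trA, Finset.sum_add_distrib]

lemma trA_zero : trA (0 : Matrix (Fin dA × Fin dB) (Fin dA × Fin dB) ℂ) = 0 := by
  ext j j'; simp [trA]

lemma trA_smul (c : ℂ) (X : Matrix (Fin dA × Fin dB) (Fin dA × Fin dB) ℂ) :
    trA (c • X) = c • trA X := by
  ext j j'; simp [trA, Finset.mul_sum]

lemma trA_kron_comm (C : Matrix (Fin dA) (Fin dA) ℂ)
    (X : Matrix (Fin dA × Fin dB) (Fin dA × Fin dB) ℂ) :
    trA ((C ⊗ₖ (1 : Matrix (Fin dB) (Fin dB) ℂ)) * X)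
      = trA (X * (C ⊗ₖ (1 : Matrix (Fin dB) (Fin dB) ℂ))) := by
  ext j j'
  simp only [trA, of_apply, mul_apply, Fintype.sum_prod_type, kroneckerMap_apply, one_apply,
    mul_ite, ite_mul, mul_one, mul_zero, zero_mul, one_mul, Finset.sum_ite_irrel,
    Finset.sum_const_zero, Finset.sum_ite_eq, Finset.sum_ite_eq',
    Finset.mem_univ, if_true]
  rw [Finset.sum_comm]
  simp [mul_comm]

lemma trA_posSemidef {X : Matrix (Fin dA × Fin dB) (Fin dA × Fin dB) ℂ}
    (hX : X.PosSemidef) : (trA X).PosSemidef := by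
  refine Matrix.PosSemidef.of_dotProduct_mulVec_nonneg ?_ ?_
  · ext j j'
    simp only [conjTranspose_apply, trA, of_apply, star_sum]
    exact Finset.sum_congr rfl fun i _ => hX.1.apply (i, j) (i, j')
  · intro x
    have key : star x ⬝ᵥ trA X *ᵥ x
        = ∑ i : Fin dA, star (fun p : Fin dA × Fin dB => if p.1 = i then x p.2 else 0)
            ⬝ᵥ X *ᵥ (fun p : Fin dA × Fin dB => if p.1 = i then x p.2 else 0) := by
      simp only [dotProduct, mulVec, Pi.star_apply, trA, of_apply, Fintype.sum_prod_type,
        apply_ite (star : ℂ → ℂ), star_zero, mul_ite, ite_mul, mul_zero, zero_mul,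
        Finset.sum_ite_irrel, Finset.sum_const_zero,
        Finset.sum_ite_eq, Finset.sum_ite_eq', Finset.mem_univ, if_true,
        Finset.sum_mul, Finset.mul_sum]
      exact sum_rot _
    rw [key]
    exact Finset.sum_nonneg fun i _ => hX.dotProduct_mulVec_nonneg _

end Aux
section Aux2
variable {dA dB : ℕ}

lemma kron_conjTranspose (A : Matrix (Fin dA) (Fin dA) ℂ) (B : Matrix (Fin dB) (Fin dB) ℂ) :
    (A ⊗ₖ B)ᴴ = Aᴴ ⊗ₖ Bᴴ := by
  ext ⟨i, j⟩ ⟨k, l⟩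
  simp [conjTranspose_apply, star_mul']

lemma real_smul_matrix {m n : Type*} (c : ℝ) (A : Matrix m n ℂ) :
    c • A = (c : ℂ) • A := by
  ext i j; simp [Complex.real_smul]

def psqrt {n : Type*} [Fintype n] [DecidableEq n] {A : Matrix n n ℂ} (h : A.PosSemidef) :
    Matrix n n ℂ :=
  (h.1.eigenvectorUnitary : Matrix n n ℂ) *
    diagonal (fun i => ((Real.sqrt (h.1.eigenvalues i) : ℝ) : ℂ)) *
    (star h.1.eigenvectorUnitary : Matrix n n ℂ)

lemma psqrt_herm {n : Type*} [Fintype n] [DecidableEq n] {A : Matrix n n ℂ}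
    (h : A.PosSemidef) : (psqrt h)ᴴ = psqrt h := by
  simp only [psqrt, conjTranspose_mul, diagonal_conjTranspose, star_eq_conjTranspose,
    conjTranspose_conjTranspose, Pi.star_def, Complex.star_def, Complex.conj_ofReal, mul_assoc]

lemma psqrt_mul_self {n : Type*} [Fintype n] [DecidableEq n] {A : Matrix n n ℂ}
    (h : A.PosSemidef) : psqrt h * psqrt h = A := by
  have hU : (star h.1.eigenvectorUnitary : Matrix n n ℂ) * (h.1.eigenvectorUnitary : Matrix n n ℂ) = 1 :=
    Unitary.star_mul_self_of_mem h.1.eigenvectorUnitary.2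
  have hD : diagonal (fun i => ((Real.sqrt (h.1.eigenvalues i) : ℝ) : ℂ)) *
      diagonal (fun i => ((Real.sqrt (h.1.eigenvalues i) : ℝ) : ℂ))
      = diagonal (RCLike.ofReal ∘ h.1.eigenvalues) := by
    rw [diagonal_mul_diagonal]
    congr 1; funext i
    simp only [Function.comp_apply]
    rw [← Complex.ofReal_mul, Real.mul_self_sqrt (h.eigenvalues_nonneg i)]
    rfl
  conv_rhs => rw [h.1.spectral_theorem, Unitary.conjStarAlgAut_apply]
  simp only [psqrt, mul_assoc]
  rw [← mul_assoc (star _ : Matrix n n ℂ) (h.1.eigenvectorUnitary : Matrix n n ℂ), hU, one_mul,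
    ← mul_assoc (diagonal _) (diagonal _), hD]

lemma invSqrt_eq {n : Type*} [Fintype n] [DecidableEq n] {A : Matrix n n ℂ}
    (h : A.PosSemidef) : invSqrt A = (psqrt h)⁻¹ := by
  rw [invSqrt, dif_pos h]
  rfl

lemma invSqrt_hermitian {n : Type*} [Fintype n] [DecidableEq n] {A : Matrix n n ℂ}
    (h : A.PosSemidef) : (invSqrt A).IsHermitian := by
  rw [invSqrt_eq h]
  show _ = _
  rw [conjTranspose_nonsing_inv, psqrt_herm h]

lemma invSqrt_mul_mul {n : Type*} [Fintype n] [DecidableEq n] {A : Matrix n n ℂ}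
    (h : A.PosSemidef) (hU : IsUnit A) : invSqrt A * A * invSqrt A = 1 := by
  have hdetA : IsUnit A.det := (Matrix.isUnit_iff_isUnit_det A).mp hU
  have hsq : psqrt h * psqrt h = A := psqrt_mul_self h
  have hdet : IsUnit (psqrt h).det := by
    rw [← hsq, Matrix.det_mul] at hdetA
    exact isUnit_of_mul_isUnit_left hdetA
  have key : (psqrt h)⁻¹ * (psqrt h * psqrt h) * (psqrt h)⁻¹ = 1 := by
    rw [show (psqrt h)⁻¹ * (psqrt h * psqrt h) * (psqrt h)⁻¹
        = ((psqrt h)⁻¹ * psqrt h) * (psqrt h * (psqrt h)⁻¹) by simp only [mul_assoc]]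
    rw [Matrix.nonsing_inv_mul _ hdet, Matrix.mul_nonsing_inv _ hdet, one_mul]
  rw [hsq] at key
  rw [invSqrt_eq h]
  exact key

variable {ρAB : Matrix (Fin dA × Fin dB) (Fin dA × Fin dB) ℂ}

lemma SEO_add (A B : Matrix (Fin dA) (Fin dA) ℂ) :
    SEO ρAB (A + B) = SEO ρAB A + SEO ρAB B := by
  simp only [SEO, add_kronecker, add_mul, trA_add, mul_add]

lemma SEO_smulC (c : ℂ) (A : Matrix (Fin dA) (Fin dA) ℂ) :
    SEO ρAB (c • A) = c • SEO ρAB A := by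
  simp only [SEO, smul_kronecker, smul_mul_assoc, trA_smul, mul_smul_comm]

lemma SEO_smul (c : ℝ) (A : Matrix (Fin dA) (Fin dA) ℂ) :
    SEO ρAB (c • A) = c • SEO ρAB A := by
  rw [real_smul_matrix, SEO_smulC, real_smul_matrix]

lemma SEO_sum {ι : Type*} (s : Finset ι) (f : ι → Matrix (Fin dA) (Fin dA) ℂ) :
    SEO ρAB (∑ i ∈ s, f i) = ∑ i ∈ s, SEO ρAB (f i) :=
  map_sum (AddMonoidHom.mk' (SEO ρAB) SEO_add) f s

lemma SEO_one (hρ : ρAB.PosSemidef) (hU : IsUnit (trA ρAB)) :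
    SEO ρAB (1 : Matrix (Fin dA) (Fin dA) ℂ) = 1 := by
  rw [SEO, Matrix.one_kronecker_one, one_mul]
  exact invSqrt_mul_mul (trA_posSemidef hρ) hU

lemma SEO_posSemidef (hρ : ρAB.PosSemidef) {A : Matrix (Fin dA) (Fin dA) ℂ}
    (hA : A.PosSemidef) : (SEO ρAB A).PosSemidef := by
  have hW : (invSqrt (trA ρAB)).IsHermitian := invSqrt_hermitian (trA_posSemidef hρ)
  have hk : (A ⊗ₖ (1 : Matrix (Fin dB) (Fin dB) ℂ))
      = (psqrt hA ⊗ₖ 1) * (psqrt hA ⊗ₖ 1) := by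
    rw [← Matrix.mul_kronecker_mul, psqrt_mul_self hA, one_mul]
  have hT : (trA ((A ⊗ₖ (1 : Matrix (Fin dB) (Fin dB) ℂ)) * ρAB)).PosSemidef := by
    rw [hk, mul_assoc, trA_kron_comm]
    have : (psqrt hA ⊗ₖ (1 : Matrix (Fin dB) (Fin dB) ℂ))
        = (psqrt hA ⊗ₖ (1 : Matrix (Fin dB) (Fin dB) ℂ))ᴴ := by
      rw [kron_conjTranspose, psqrt_herm hA, Matrix.conjTranspose_one]
    refine trA_posSemidef ?_
    nth_rewrite 2 [this]
    exact hρ.mul_mul_conjTranspose_same _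
  have := hT.mul_mul_conjTranspose_same (invSqrt (trA ρAB))
  rw [hW.eq] at this
  rw [SEO]
  rwa [mul_assoc] at this ⊢

end Aux2
section Aux3

lemma pair_sum {k : ℕ} {α β : Type*} [Fintype α] [Fintype β] (h : Fin k → α → β → ℂ) :
    ∑ f : Fin k → α, ∑ g : Fin k → β, ∏ y, h y (f y) (g y)
      = ∏ y, ∑ a, ∑ b, h y a b := by
  symm
  calc ∏ y, ∑ a, ∑ b, h y a b
      = ∏ y, ∑ p : α × β, h y p.1 p.2 := by
        exact Finset.prod_congr rfl fun y _ => (Fintype.sum_prod_type (f := fun p : α × β => h y p.1 p.2)).symm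
    _ = ∑ u ∈ Fintype.piFinset (fun _ : Fin k => (Finset.univ : Finset (α × β))),
          ∏ y, h y (u y).1 (u y).2 := Finset.prod_univ_sum _ _
    _ = ∑ u : Fin k → α × β, ∏ y, h y (u y).1 (u y).2 := by rw [Fintype.piFinset_univ]
    _ = ∑ fg : (Fin k → α) × (Fin k → β), ∏ y, h y (fg.1 y) (fg.2 y) :=
        Fintype.sum_equiv (Equiv.arrowProdEquivProdArrow (Fin k) (fun _ => α) (fun _ => β)) _ _ (fun u => rfl)
    _ = ∑ f : Fin k → α, ∑ g : Fin k → β, ∏ y, h y (f y) (g y) :=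
        Fintype.sum_prod_type (f := fun fg : (Fin k → α) × (Fin k → β) => ∏ y, h y (fg.1 y) (fg.2 y))

lemma trace_tpow_prodOp {d k : ℕ} (ρ : Matrix (Fin d) (Fin d) ℂ)
    (C : Fin k → Matrix (Fin d) (Fin d) ℂ) :
    (tpow k ρ * prodOp C).trace = ∏ y, (ρ * C y).trace := by
  have lhs : (tpow k ρ * prodOp C).trace
      = ∑ f : Fin k → Fin d, ∑ g : Fin k → Fin d, ∏ y, (ρ (f y) (g y) * C y (g y) (f y)) := by
    simp only [Matrix.trace, Matrix.diag_apply, Matrix.mul_apply, tpow, prodOp, Matrix.of_apply,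
      Finset.prod_mul_distrib]
  have rhs : ∀ y, (ρ * C y).trace = ∑ i, ∑ j, ρ i j * C y j i := by
    intro y; simp [Matrix.trace, Matrix.diag_apply, Matrix.mul_apply]
  rw [lhs, pair_sum (fun y i j => ρ i j * C y j i)]
  exact Finset.prod_congr rfl fun y _ => (rhs y).symm

lemma comb {k nb : ℕ} (pr : Fin k → ℝ) (q : Fin k → Fin nb → ℝ) (t : Fin k → Fin nb → ℂ)
    (ht : ∀ y, ∑ c, t y c = 1) :
    ∑ b : Fin k → Fin nb, ((∑ y, pr y * q y (b y) : ℝ) : ℂ) * ∏ y, t y (b y)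
      = ∑ y, (pr y : ℂ) * ∑ c, (q y c : ℂ) * t y c := by
  have core : ∀ y : Fin k, ∑ b : Fin k → Fin nb, (q y (b y) : ℂ) * ∏ y', t y' (b y')
      = ∑ c, (q y c : ℂ) * t y c := by
    intro y
    have h1 : ∀ b : Fin k → Fin nb, (q y (b y) : ℂ) * ∏ y', t y' (b y')
        = ∏ y', (if y' = y then (q y (b y') : ℂ) * t y (b y') else t y' (b y')) := by
      intro b
      rw [← Finset.mul_prod_erase Finset.univ _ (Finset.mem_univ y),
        ← Finset.mul_prod_erase Finset.univ
          (fun y' => if y' = y then (q y (b y') : ℂ) * t y (b y') else t y' (b y'))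
          (Finset.mem_univ y), if_pos rfl, ← mul_assoc]
      congr 1
      exact Finset.prod_congr rfl fun y' hy' =>
        (if_neg (Finset.ne_of_mem_erase hy')).symm
    calc ∑ b : Fin k → Fin nb, (q y (b y) : ℂ) * ∏ y', t y' (b y')
        = ∑ b : Fin k → Fin nb,
            ∏ y', (if y' = y then (q y (b y') : ℂ) * t y (b y') else t y' (b y')) :=
          Finset.sum_congr rfl fun b _ => h1 b
      _ = ∏ y', ∑ c, (if y' = y then (q y c : ℂ) * t y c else t y' c) := by
          rw [Finset.prod_univ_sum (fun _ => Finset.univ), Fintype.piFinset_univ]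
      _ = ∏ y', (if y' = y then ∑ c, (q y c : ℂ) * t y c else 1) := by
          refine Finset.prod_congr rfl fun y' _ => ?_
          rw [Finset.sum_ite_irrel]
          by_cases hyy : y' = y <;> simp [hyy, ht]
      _ = ∑ c, (q y c : ℂ) * t y c := by simp
  have expand : ∀ b : Fin k → Fin nb,
      ((∑ y, pr y * q y (b y) : ℝ) : ℂ) * ∏ y, t y (b y)
        = ∑ y, (pr y : ℂ) * ((q y (b y) : ℂ) * ∏ y', t y' (b y')) := by
    intro b
    push_cast
    rw [Finset.sum_mul]
    exact Finset.sum_congr rfl fun y _ => by ring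
  rw [Finset.sum_congr rfl (fun b _ => expand b), Finset.sum_comm]
  exact Finset.sum_congr rfl fun y _ => by rw [← Finset.mul_sum, core y]

end Aux3

/-- if the assemblage `M` is `k`-simulable, then its steering equivalent
observables are `k`-compatible with a `k`-copy joint observable of product form;
consequently, if the SEO admit no product-form `k`-copy joint observable, then `M` is
not `k`-simulable. -/
theorem seo_kCompatibleProd_of_kSimulable {dA dB na nx : ℕ} (k : ℕ)
    (ρAB : Matrix (Fin dA × Fin dB) (Fin dA × Fin dB) ℂ)
    (hρAB : IsDensity ρAB)
    (hinv : IsUnit (trA ρAB))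
    (M : Fin nx → Fin na → Matrix (Fin dA) (Fin dA) ℂ)
    (hM : ∀ x, IsPOVM (M x)) :
    (KSimulable k M → KCompatibleProd k fun x a => SEO ρAB (M x a)) ∧
    (¬ KCompatibleProd k (fun x a => SEO ρAB (M x a)) → ¬ KSimulable k M) := by
  have main : KSimulable k M → KCompatibleProd k fun x a => SEO ρAB (M x a) := by
    rintro ⟨nb, B, p, q, hB, hp0, hp1, hq0, hq1, hrep⟩
    refine ⟨nb, fun y c => SEO ρAB (B y c), fun x b a => ∑ y, p x y * q x y (b y) a,
      ?_, ?_, ?_, ?_⟩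
    · intro y
      refine ⟨fun c => SEO_posSemidef hρAB.1 ((hB y).1 c), ?_⟩
      rw [← SEO_sum, (hB y).2, SEO_one hρAB.1 hinv]
    · intro x b a
      exact Finset.sum_nonneg fun y _ => mul_nonneg (hp0 x y) (hq0 x y (b y) a)
    · intro x b
      rw [Finset.sum_comm]
      have : ∀ y, ∑ a, p x y * q x y (b y) a = p x y := by
        intro y; rw [← Finset.mul_sum, hq1 x y (b y), mul_one]
      rw [Finset.sum_congr rfl fun y _ => this y]
      exact hp1 x
    · intro ρ hρ x a
      show (ρ * SEO ρAB (M x a)).trace = _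
      have hSEO : SEO ρAB (M x a) = ∑ y, p x y • ∑ c, q x y c a • SEO ρAB (B y c) := by
        rw [hrep x a, SEO_sum]
        refine Finset.sum_congr rfl fun y _ => ?_
        rw [SEO_smul, SEO_sum]
        congr 1
        exact Finset.sum_congr rfl fun c _ => SEO_smul _ _
      have ht : ∀ y, ∑ c, (ρ * SEO ρAB (B y c)).trace = 1 := by
        intro y
        rw [← Matrix.trace_sum, ← Matrix.mul_sum, ← SEO_sum, (hB y).2,
          SEO_one hρAB.1 hinv, mul_one, hρ.2]
      have lhs_eq : (ρ * ∑ y, p x y • ∑ c, q x y c a • SEO ρAB (B y c)).trace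
          = ∑ y, (p x y : ℂ) * ∑ c, (q x y c a : ℂ) * (ρ * SEO ρAB (B y c)).trace := by
        simp [Matrix.mul_sum, mul_smul_comm, Complex.real_smul, Finset.mul_sum]
      have rhs_eq : ∀ b : Fin k → Fin nb,
          (∑ y, p x y * q x y (b y) a : ℝ) •
              (tpow k ρ * prodOp fun y => SEO ρAB (B y (b y))).trace
            = ((∑ y, p x y * q x y (b y) a : ℝ) : ℂ) *
                ∏ y, (ρ * SEO ρAB (B y (b y))).trace := by
        intro b
        rw [trace_tpow_prodOp, Complex.real_smul]
      rw [hSEO, lhs_eq, Finset.sum_congr rfl fun b _ => rhs_eq b]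
      exact (comb (p x) (fun y c => q x y c a)
        (fun y c => (ρ * SEO ρAB (B y c)).trace) ht).symm
  exact ⟨main, fun h hs => h (main hs)⟩
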